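/- arXiv:1603.05437 — 3 statements merged into one kernel-verified Lean document; each statement's English description precedes it below -/
import Mathlib

section
/- For every n ≥ 1, every t ≥ 0, and every natural number k that is not divisible by N, one has E[(W^n(t))^k] = 0; moreover E[(W^n(t))^N] = α·⌊nt⌋/n. -/
open MeasureTheory ProbabilityTheory Filter

/-- The rescaled complex random walk `W^n(t) = n^{-1/N} ∑_{k=1}^{⌊nt⌋} ξ_k`. -/
noncomputable def W {Ω : Type*} (ξ : ℕ → Ω → ℂ) (N n : ℕ) (t : ℝ) (ω : Ω) : ℂ :=
  (((n : ℝ) ^ (-(1 / (N : ℝ))) : ℝ) : ℂ) * ∑ k ∈ Finset.Icc 1 ⌊(n : ℝ) * t⌋₊, ξ k ω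

lemma my_integrable_dirac {α E : Type*} [MeasurableSpace α] [MeasurableSingletonClass α]
    [NormedAddCommGroup E] (f : α → E) (hf : StronglyMeasurable f) (a : α) :
    Integrable f (Measure.dirac a) := by
  refine ⟨hf.aestronglyMeasurable, ?_⟩
  simp only [HasFiniteIntegral, lintegral_dirac]
  exact ENNReal.coe_lt_top

/-- Product formula for independent complex random variables, via product measures. -/
lemma indep_integral_mul {Ω : Type*} [MeasureSpace Ω] [IsProbabilityMeasure (ℙ : Measure Ω)]
    (X Y : Ω → ℂ) (hX : Measurable X) (hY : Measurable Y) (h : IndepFun X Y ℙ) :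
    ∫ ω, X ω * Y ω ∂ℙ = (∫ ω, X ω ∂ℙ) * ∫ ω, Y ω ∂ℙ := by
  rw [indepFun_iff_map_prod_eq_prod_map_map hX.aemeasurable hY.aemeasurable] at h
  haveI : IsProbabilityMeasure ((ℙ : Measure Ω).map X) := Measure.isProbabilityMeasure_map hX.aemeasurable
  haveI : IsProbabilityMeasure ((ℙ : Measure Ω).map Y) := Measure.isProbabilityMeasure_map hY.aemeasurable
  have h1 : ∫ ω, X ω * Y ω ∂ℙ
      = ∫ p : ℂ × ℂ, p.1 * p.2 ∂((ℙ : Measure Ω).map (fun ω => (X ω, Y ω))) := by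
    rw [integral_map (hX.prodMk hY).aemeasurable]
    exact (measurable_fst.mul measurable_snd).aestronglyMeasurable
  have h2 : ∫ x : ℂ, x ∂((ℙ : Measure Ω).map X) = ∫ ω, X ω ∂ℙ :=
    integral_map hX.aemeasurable measurable_id.aestronglyMeasurable
  have h3 : ∫ x : ℂ, x ∂((ℙ : Measure Ω).map Y) = ∫ ω, Y ω ∂ℙ :=
    integral_map hY.aemeasurable measurable_id.aestronglyMeasurable
  rw [h1, h, integral_prod_mul (fun x : ℂ => x) (fun y : ℂ => y), h2, h3]

/-- for every `n ≥ 1`, `t ≥ 0` and `k` not divisible by `N`,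
`E[(W^n(t))^k] = 0`; moreover `E[(W^n(t))^N] = α⌊nt⌋/n`. -/
theorem stmt_2 {Ω : Type*} [MeasureSpace Ω] [IsProbabilityMeasure (ℙ : Measure Ω)]
    (N : ℕ) (hN : 2 < N) (α β : ℂ) (hα : α ≠ 0) (hβ : β ^ N = α)
    (ξ : ℕ → Ω → ℂ) (hmeas : ∀ k, Measurable (ξ k))
    (hindep : iIndepFun ξ ℙ)
    (hdist : ∀ k, Measure.map (ξ k) ℙ = (N : ENNReal)⁻¹ •
      ∑ j ∈ Finset.range N,
        Measure.dirac (β * Complex.exp (2 * Real.pi * Complex.I * j / N)))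
    (n : ℕ) (hn : 1 ≤ n) (t : ℝ) (ht : 0 ≤ t) :
    (∀ k : ℕ, ¬ N ∣ k → ∫ ω, (W ξ N n t ω) ^ k ∂ℙ = 0) ∧
    ∫ ω, (W ξ N n t ω) ^ N ∂ℙ = α * (⌊(n : ℝ) * t⌋₊ : ℂ) / (n : ℂ) := by
  have hN0 : (N : ℂ) ≠ 0 := by
    exact_mod_cast Nat.cast_ne_zero.mpr (by omega)
  have h2pi : (2 * (Real.pi : ℂ) * Complex.I) ≠ 0 :=
    mul_ne_zero (mul_ne_zero two_ne_zero (by exact_mod_cast Real.pi_ne_zero)) Complex.I_ne_zero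
  -- moments of each ξ k
  have hmom : ∀ k p : ℕ, ∫ ω, ξ k ω ^ p ∂ℙ = if N ∣ p then β ^ p else 0 := by
    intro k p
    have h1 : ∫ ω, ξ k ω ^ p ∂ℙ = ∫ x, x ^ p ∂((ℙ : Measure Ω).map (ξ k)) :=
      (integral_map (hmeas k).aemeasurable
        (measurable_id.pow_const p).aestronglyMeasurable).symm
    rw [h1, hdist k, integral_smul_measure, integral_finset_sum_measure (by
      intro j hj
      exact my_integrable_dirac _ ((measurable_id.pow_const p).stronglyMeasurable) _)]
    simp only [integral_dirac]
    have hz : ∀ j ∈ Finset.range N,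
        (β * Complex.exp (2 * Real.pi * Complex.I * j / N)) ^ p
          = β ^ p * (Complex.exp (2 * Real.pi * Complex.I * p / N)) ^ j := by
      intro j _
      rw [mul_pow, ← Complex.exp_nat_mul, ← Complex.exp_nat_mul]
      congr 1; ring
    rw [Finset.sum_congr rfl hz, ← Finset.mul_sum]
    set z : ℂ := Complex.exp (2 * Real.pi * Complex.I * p / N) with hzdef
    rw [ENNReal.toReal_inv, ENNReal.toReal_natCast]
    by_cases hdvd : N ∣ p
    · obtain ⟨q, rfl⟩ := hdvd
      have hz1 : z = 1 := by
        rw [hzdef]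
        have he : (2 * (Real.pi : ℂ) * Complex.I * ((N * q : ℕ) : ℂ) / (N : ℂ))
            = (q : ℤ) * (2 * Real.pi * Complex.I) := by
          push_cast; field_simp
        rw [he]
        exact Complex.exp_int_mul_two_pi_mul_I q
      rw [if_pos (dvd_mul_right N q)]
      simp only [hz1, one_pow, Finset.sum_const, Finset.card_range, nsmul_eq_mul, mul_one]
      rw [Complex.real_smul]
      push_cast
      field_simp
    · have hz1 : z ≠ 1 := by
        intro hz1
        rw [hzdef, Complex.exp_eq_one_iff] at hz1
        obtain ⟨m, hm⟩ := hz1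
        apply hdvd
        have key : (2 * (Real.pi : ℂ) * Complex.I) * p
            = (2 * (Real.pi : ℂ) * Complex.I) * ((m : ℂ) * N) := by
          field_simp at hm
          linear_combination (2 * (Real.pi : ℂ) * Complex.I) * hm
        have hpc : (p : ℂ) = (m : ℂ) * N := mul_left_cancel₀ h2pi key
        have hpZ : (p : ℤ) = m * N := by exact_mod_cast hpc
        exact Int.natCast_dvd_natCast.mp ⟨m, by rw [hpZ]; ring⟩
      have hgeo : ∑ j ∈ Finset.range N, z ^ j = 0 := by
        rw [geom_sum_eq hz1]
        have hzN : z ^ N = 1 := by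
          rw [hzdef, ← Complex.exp_nat_mul]
          have he : (N : ℂ) * (2 * Real.pi * Complex.I * p / N)
              = (p : ℤ) * (2 * Real.pi * Complex.I) := by
            push_cast; field_simp
          rw [he]; exact Complex.exp_int_mul_two_pi_mul_I p
        rw [hzN]; simp
      rw [hgeo, if_neg hdvd]
      simp
  
  have hcnorm : ∀ j : ℕ, ‖β * Complex.exp (2 * Real.pi * Complex.I * j / N)‖ = ‖β‖ := by
    intro j
    have he : (2 * (Real.pi : ℂ) * Complex.I * (j : ℂ) / (N : ℂ))
        = ((2 * Real.pi * j / N : ℝ) : ℂ) * Complex.I := by push_cast; ring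
    have h2 : ‖Complex.exp (((2 * Real.pi * (j : ℝ) / (N : ℝ) : ℝ) : ℂ) * Complex.I)‖ = 1 := by
      rw [Complex.norm_exp_ofReal_mul_I]
    rw [norm_mul, he, h2, mul_one]
  -- a.e. bound on the ξ's
  have hbd : ∀ᵐ ω ∂(ℙ : Measure Ω), ∀ j : ℕ, ‖ξ j ω‖ ≤ ‖β‖ := by
    rw [ae_all_iff]
    intro j
    have hset : MeasurableSet {x : ℂ | ¬ ‖x‖ ≤ ‖β‖} :=
      (measurableSet_le measurable_norm measurable_const).compl
    rw [ae_iff]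
    have hpre : {ω | ¬ ‖ξ j ω‖ ≤ ‖β‖} = ξ j ⁻¹' {x : ℂ | ¬ ‖x‖ ≤ ‖β‖} := rfl
    rw [hpre, ← Measure.map_apply (hmeas j) hset, hdist j]
    simp only [Measure.smul_apply, Measure.coe_finset_sum, Finset.sum_apply]
    have hz : ∀ i ∈ Finset.range N,
        Measure.dirac (β * Complex.exp (2 * Real.pi * Complex.I * i / N))
          {x : ℂ | ¬ ‖x‖ ≤ ‖β‖} = 0 := by
      intro i _
      have hni : (β * Complex.exp (2 * Real.pi * Complex.I * i / N))
          ∉ {x : ℂ | ¬ ‖x‖ ≤ ‖β‖} := by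
        simp only [Set.mem_setOf_eq, not_not]
        exact le_of_eq (hcnorm i)
      rw [Measure.dirac_apply' _ hset, Set.indicator_of_notMem hni]
    rw [Finset.sum_congr rfl hz]
    simp
  have hSmeas : ∀ m : ℕ, Measurable (fun ω => ∑ i ∈ Finset.Icc 1 m, ξ i ω) :=
    fun m => Finset.measurable_sum _ (fun i _ => hmeas i)
  -- integrability
  have hint : ∀ (m a b j : ℕ),
      Integrable (fun ω => (∑ i ∈ Finset.Icc 1 m, ξ i ω) ^ a * ξ j ω ^ b) ℙ := by
    intro m a b j
    apply Integrable.mono' (integrable_const (((m : ℝ) * ‖β‖) ^ a * ‖β‖ ^ b))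
    · exact (((hSmeas m).pow_const a).mul ((hmeas j).pow_const b)).aestronglyMeasurable
    · filter_upwards [hbd] with ω hω
      rw [norm_mul, norm_pow, norm_pow]
      have h1 : ‖∑ i ∈ Finset.Icc 1 m, ξ i ω‖ ≤ (m : ℝ) * ‖β‖ := by
        calc ‖∑ i ∈ Finset.Icc 1 m, ξ i ω‖ ≤ ∑ i ∈ Finset.Icc 1 m, ‖ξ i ω‖ :=
              norm_sum_le _ _
        _ ≤ ∑ _i ∈ Finset.Icc 1 m, ‖β‖ := Finset.sum_le_sum (fun i _ => hω i)
        _ = (m : ℝ) * ‖β‖ := by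
            rw [Finset.sum_const, Nat.card_Icc, nsmul_eq_mul]
            norm_num
      exact mul_le_mul (pow_le_pow_left₀ (norm_nonneg _) h1 a)
        (pow_le_pow_left₀ (norm_nonneg _) (hω j) b) (by positivity) (by positivity)
  -- main induction on the number of summands
  have key : ∀ m : ℕ,
      (∀ k : ℕ, ¬ N ∣ k → ∫ ω, (∑ i ∈ Finset.Icc 1 m, ξ i ω) ^ k ∂ℙ = 0) ∧
      ∫ ω, (∑ i ∈ Finset.Icc 1 m, ξ i ω) ^ N ∂ℙ = (m : ℂ) * β ^ N := by
    intro m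
    induction m with
    | zero =>
      have hNne : N ≠ 0 := by omega
      have he : Finset.Icc 1 0 = (∅ : Finset ℕ) := Finset.Icc_eq_empty (by omega)
      constructor
      · intro k hk
        have hk0 : k ≠ 0 := by rintro rfl; exact hk (dvd_zero N)
        simp [he, zero_pow hk0]
      · simp [he, zero_pow hNne]
    | succ m ih =>
      have hSind : IndepFun (fun ω => ∑ i ∈ Finset.Icc 1 m, ξ i ω) (ξ (m+1)) ℙ := by
        have h := hindep.indepFun_finsetSum_of_notMem hmeas
          (s := Finset.Icc 1 m) (i := m+1) (by simp)
        have he : (∑ j ∈ Finset.Icc 1 m, ξ j) = fun ω => ∑ i ∈ Finset.Icc 1 m, ξ i ω := by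
          funext ω; simp [Finset.sum_apply]
        rwa [he] at h
      have hprod : ∀ a b : ℕ,
          ∫ ω, (∑ i ∈ Finset.Icc 1 m, ξ i ω) ^ a * ξ (m+1) ω ^ b ∂ℙ
            = (∫ ω, (∑ i ∈ Finset.Icc 1 m, ξ i ω) ^ a ∂ℙ) * ∫ ω, ξ (m+1) ω ^ b ∂ℙ := by
        intro a b
        exact indep_integral_mul _ _ ((hSmeas m).pow_const a) ((hmeas (m+1)).pow_const b)
          (hSind.comp (measurable_id.pow_const a) (measurable_id.pow_const b))
      have hexp : ∀ k : ℕ,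
          ∫ ω, (∑ i ∈ Finset.Icc 1 (m+1), ξ i ω) ^ k ∂ℙ
            = ∑ i ∈ Finset.range (k+1),
                (∫ ω, (∑ i ∈ Finset.Icc 1 m, ξ i ω) ^ i ∂ℙ)
                  * (if N ∣ (k-i) then β ^ (k-i) else 0) * (k.choose i : ℂ) := by
        intro k
        have h1 : (fun ω => (∑ i ∈ Finset.Icc 1 (m+1), ξ i ω) ^ k)
            = fun ω => ∑ i ∈ Finset.range (k+1),
                (∑ i ∈ Finset.Icc 1 m, ξ i ω) ^ i * ξ (m+1) ω ^ (k-i) * (k.choose i : ℂ) := by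
          funext ω
          rw [Finset.sum_Icc_succ_top (by omega), add_pow]
        rw [h1, integral_finset_sum _ (fun i _ => (hint m i (k-i) (m+1)).mul_const _)]
        refine Finset.sum_congr rfl (fun i _ => ?_)
        rw [integral_mul_const, hprod i (k-i), hmom (m+1) (k-i)]
      constructor
      · intro k hk
        rw [hexp k]
        refine Finset.sum_eq_zero (fun i hi => ?_)
        by_cases hdvd : N ∣ (k - i)
        · have hi' : i ≤ k := by
            simp only [Finset.mem_range] at hi; omega
          have hni : ¬ N ∣ i := by
            intro hNi
            have h3 := Nat.dvd_add hNi hdvd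
            rw [Nat.add_sub_cancel' hi'] at h3
            exact hk h3
          rw [ih.1 i hni]
          ring
        · rw [if_neg hdvd]
          ring
      · rw [hexp N]
        have hterm : ∀ i ∈ Finset.range (N+1),
            (∫ ω, (∑ i ∈ Finset.Icc 1 m, ξ i ω) ^ i ∂ℙ)
              * (if N ∣ (N-i) then β ^ (N-i) else 0) * (N.choose i : ℂ)
            = (if i = 0 then β ^ N else 0) + (if i = N then (m : ℂ) * β ^ N else 0) := by
          intro i hi
          simp only [Finset.mem_range] at hi
          by_cases hi0 : i = 0
          · subst hi0
            have h0 : ∫ (ω : Ω), (∑ i ∈ Finset.Icc 1 m, ξ i ω) ^ 0 ∂ℙ = 1 := by simp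
            rw [h0]
            simp only [Nat.sub_zero]
            rw [if_pos dvd_rfl]
            simp [(by omega : ¬ (0 : ℕ) = N)]
            intro h
            exact absurd h (by omega)
          · by_cases hiN : i = N
            · rw [hiN]
              simp only [Nat.sub_self]
              rw [ih.2, if_pos (dvd_zero N)]
              simp [Nat.choose_self]
              intro h
              exact absurd h (by omega)
            · have h1 : ¬ N ∣ (N - i) := by
                intro hd
                have h2 : 0 < N - i := by omega
                have := Nat.le_of_dvd h2 hd
                omega
              rw [if_neg h1, if_neg hi0, if_neg hiN]
              ring
        rw [Finset.sum_congr rfl hterm, Finset.sum_add_distrib]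
        simp only [Finset.sum_ite_eq' (Finset.range (N+1)), Finset.mem_range]
        rw [if_pos (by omega), if_pos (by omega)]
        push_cast
        ring
  -- conclusion
  set m := ⌊(n : ℝ) * t⌋₊ with hm
  set cr : ℝ := (n : ℝ) ^ (-(1 / (N : ℝ))) with hcr
  have hW : ∀ k : ℕ, ∫ ω, (W ξ N n t ω) ^ k ∂ℙ
      = ((cr : ℂ)) ^ k * ∫ ω, (∑ i ∈ Finset.Icc 1 m, ξ i ω) ^ k ∂ℙ := by
    intro k
    have h1 : (fun ω => (W ξ N n t ω) ^ k)
        = fun ω => ((cr : ℂ)) ^ k * (∑ i ∈ Finset.Icc 1 m, ξ i ω) ^ k := by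
      funext ω
      rw [W, mul_pow]
    rw [h1, integral_const_mul]
  have hn0R : (n : ℝ) ≠ 0 := by positivity
  have hn0C : (n : ℂ) ≠ 0 := by exact_mod_cast hn0R
  constructor
  · intro k hk
    rw [hW k, (key m).1 k hk, mul_zero]
  · rw [hW N, (key m).2]
    have hcN : cr ^ N = (n : ℝ)⁻¹ := by
      rw [hcr, ← Real.rpow_natCast ((n : ℝ) ^ (-(1 / (N : ℝ)))) N,
        ← Real.rpow_mul (by positivity)]
      rw [show (-(1 / (N : ℝ))) * (N : ℕ) = -1 by
        field_simp]
      exact Real.rpow_neg_one _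
    have hcNC : ((cr : ℂ)) ^ N = ((n : ℝ)⁻¹ : ℝ) := by
      rw [← Complex.ofReal_pow, hcN]
    rw [hcNC, ← hβ]
    push_cast
    field_simp
end

section
/- For every λ ∈ ℂ and every t ≥ 0, the characteristic functions of W^n(t) converge: lim_{n→∞} E[exp(iλ·W^n(t))] = exp(i^N · λ^N · α·t / N!), where i is the imaginary unit. -/
open MeasureTheory ProbabilityTheory Filter

open Complex Finset in
/-- Norm bound on a difference of powers. -/
lemma aux_norm_pow_sub_pow (u v : ℂ) (r : ℝ) (m : ℕ) (hu : ‖u‖ ≤ r)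
    (hv : ‖v‖ ≤ r) :
    ‖u ^ m - v ^ m‖ ≤ m * r ^ (m - 1) * ‖u - v‖ := by
  have hr : 0 ≤ r := le_trans (norm_nonneg u) hu
  rw [← geom_sum₂_mul u v m, norm_mul]
  gcongr
  calc ‖∑ i ∈ range m, u ^ i * v ^ (m - 1 - i)‖
      ≤ ∑ i ∈ range m, ‖u ^ i * v ^ (m - 1 - i)‖ :=
        norm_sum_le _ _
    _ ≤ ∑ i ∈ range m, r ^ (m - 1) := by
        apply Finset.sum_le_sum
        intro i hi
        rw [norm_mul, norm_pow, norm_pow]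
        calc ‖u‖ ^ i * ‖v‖ ^ (m - 1 - i)
            ≤ r ^ i * r ^ (m - 1 - i) :=
              mul_le_mul (pow_le_pow_left₀ (norm_nonneg u) hu i)
                (pow_le_pow_left₀ (norm_nonneg v) hv _) (by positivity) (by positivity)
          _ = r ^ (m - 1) := by
              rw [← pow_add]
              congr 1
              simp at hi
              omega
    _ = m * r ^ (m - 1) := by rw [Finset.sum_const, card_range, nsmul_eq_mul]

open Complex Finset in
/-- If `m n * (u n - 1) → a` and `m n → ∞` then `u n ^ m n → exp a`. -/
lemma aux_tendsto_pow_exp {u : ℕ → ℂ} {m : ℕ → ℕ} {a : ℂ}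
    (h : Tendsto (fun n => (m n : ℂ) * (u n - 1)) atTop (nhds a))
    (hm : Tendsto m atTop atTop) :
    Tendsto (fun n => u n ^ m n) atTop (nhds (Complex.exp a)) := by
  set c : ℕ → ℂ := fun n => (m n : ℂ) * (u n - 1) with hc_def
  have hexp : Tendsto (fun n => Complex.exp (c n)) atTop (nhds (Complex.exp a)) := h.cexp
  have hnorm : Tendsto (fun n => ‖c n‖) atTop (nhds (‖a‖)) :=
    (continuous_norm.tendsto a).comp h
  have hdiff : Tendsto (fun n => u n ^ m n - Complex.exp (c n)) atTop (nhds 0) := by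
    apply squeeze_zero_norm'
      (a := fun n => Real.exp (‖c n‖) * ‖c n‖ ^ 2 * ((m n : ℝ))⁻¹)
    · -- eventual bound
      have h1 : ∀ᶠ n in atTop, ‖c n‖ ≤ ‖a‖ + 1 :=
        hnorm.eventually_le_const (by linarith)
      have h2 : ∀ᶠ n in atTop, (‖a‖ + 1) ≤ (m n : ℝ) := by
        have : Tendsto (fun n => (m n : ℝ)) atTop atTop :=
          tendsto_natCast_atTop_atTop.comp hm
        exact this.eventually_ge_atTop _
      have h3 : ∀ᶠ n in atTop, 1 ≤ m n := hm.eventually_ge_atTop 1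
      filter_upwards [h1, h2, h3] with n hn1 hn2 hn3
      have hM0 : (0:ℝ) < (m n : ℝ) := by exact_mod_cast hn3
      have hMz : ((m n : ℕ) : ℂ) ≠ 0 := by exact_mod_cast hM0.ne'
      set z : ℂ := c n / (m n : ℂ) with hz_def
      have hu_eq : u n = 1 + z := by
        rw [hz_def]
        show u n = 1 + (m n : ℂ) * (u n - 1) / m n
        rw [mul_div_cancel_left₀ _ hMz]
        ring
      have hzabs : ‖z‖ = ‖c n‖ / (m n : ℝ) := by
        rw [hz_def, norm_div]
        norm_num
      have hz1 : ‖z‖ ≤ 1 := by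
        rw [hzabs, div_le_one hM0]
        linarith
      have hexp_eq : Complex.exp (c n) = Complex.exp z ^ m n := by
        rw [← Complex.exp_nat_mul]
        congr 1
        rw [hz_def, mul_div_cancel₀ _ hMz]
      have hbig : ‖u n - Complex.exp z‖ ≤ ‖z‖ ^ 2 := by
        have := Complex.exp_bound hz1 (by norm_num : 0 < 2)
        have hsum : ∑ p ∈ range 2, z ^ p / p.factorial = 1 + z := by
          simp [Finset.sum_range_succ]
        rw [hsum] at this
        calc ‖u n - Complex.exp z‖ = ‖Complex.exp z - (1 + z)‖ := by
              rw [hu_eq]; exact norm_sub_rev _ _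
          _ ≤ ‖z‖ ^ 2 * ((2+1 : ℕ) * ((2:ℕ).factorial * (2:ℕ) : ℝ)⁻¹) := by
              exact_mod_cast this
          _ ≤ ‖z‖ ^ 2 := by
              rw [show ((2:ℕ).factorial : ℝ) = 2 by norm_num]
              nlinarith [sq_nonneg (‖z‖)]
      have hr1 : ‖u n‖ ≤ Real.exp (‖z‖) := by
        rw [hu_eq]
        calc ‖1 + z‖ ≤ 1 + ‖z‖ := by
              simpa using norm_add_le 1 z
          _ ≤ Real.exp (‖z‖) := by
              have := Real.add_one_le_exp (‖z‖)
              linarith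
      have hr2 : ‖Complex.exp z‖ ≤ Real.exp (‖z‖) := by
        rw [Complex.norm_exp]
        exact Real.exp_le_exp.2 (Complex.re_le_norm z)
      have hkey := aux_norm_pow_sub_pow (u n) (Complex.exp z) (Real.exp (‖z‖))
        (m n) hr1 hr2
      rw [hexp_eq]
      calc ‖u n ^ m n - Complex.exp z ^ m n‖
          = ‖u n ^ m n - Complex.exp z ^ m n‖ := rfl
        _ ≤ (m n) * Real.exp (‖z‖) ^ (m n - 1) * ‖u n - Complex.exp z‖ :=
            hkey
        _ ≤ (m n) * Real.exp (‖c n‖) * ‖z‖ ^ 2 := by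
            have he : Real.exp (‖z‖) ^ (m n - 1) ≤ Real.exp (‖c n‖) := by
              rw [← Real.exp_nat_mul]
              apply Real.exp_le_exp.2
              calc ((m n - 1 : ℕ) : ℝ) * ‖z‖ ≤ (m n : ℝ) * ‖z‖ :=
                    mul_le_mul_of_nonneg_right (by exact_mod_cast Nat.sub_le _ _)
                      (norm_nonneg z)
                _ = ‖c n‖ := by rw [hzabs]; field_simp
            exact mul_le_mul (mul_le_mul_of_nonneg_left he (by positivity)) hbig
              (norm_nonneg _) (by positivity)
        _ = Real.exp (‖c n‖) * ‖c n‖ ^ 2 * ((m n : ℝ))⁻¹ := by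
            have hmne : ((m n : ℕ) : ℝ) ≠ 0 := hM0.ne'
            rw [hzabs, div_pow]
            field_simp
    · -- the bound tends to zero
      have hnum : Tendsto (fun n => Real.exp (‖c n‖) * ‖c n‖ ^ 2) atTop
          (nhds (Real.exp (‖a‖) * ‖a‖ ^ 2)) :=
        (hnorm.rexp.mul (hnorm.pow 2))
      have hinv : Tendsto (fun n => ((m n : ℝ))⁻¹) atTop (nhds 0) :=
        tendsto_inv_atTop_zero.comp (tendsto_natCast_atTop_atTop.comp hm)
      simpa using hnum.mul hinv
  have := hdiff.add hexp
  simpa using this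

/-- Expectation of a product of two independent complex random variables. -/
lemma aux_integral_mul_indep {Ω : Type*} {mΩ : MeasurableSpace Ω} {μ : Measure Ω}
    {X Y : Ω → ℂ} (h : IndepFun X Y μ) (hX : Integrable X μ) (hY : Integrable Y μ) :
    ∫ ω, X ω * Y ω ∂μ = (∫ ω, X ω ∂μ) * ∫ ω, Y ω ∂μ := by
  have hXY : Integrable (X * Y) μ := h.integrable_mul hX hY
  have hac : IndepFun (fun ω => (X ω).re) (fun ω => (Y ω).re) μ :=
    h.comp Complex.measurable_re Complex.measurable_re
  have had : IndepFun (fun ω => (X ω).re) (fun ω => (Y ω).im) μ :=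
    h.comp Complex.measurable_re Complex.measurable_im
  have hbc : IndepFun (fun ω => (X ω).im) (fun ω => (Y ω).re) μ :=
    h.comp Complex.measurable_im Complex.measurable_re
  have hbd : IndepFun (fun ω => (X ω).im) (fun ω => (Y ω).im) μ :=
    h.comp Complex.measurable_im Complex.measurable_im
  have hXre : Integrable (fun ω => (X ω).re) μ := hX.re
  have hXim : Integrable (fun ω => (X ω).im) μ := hX.im
  have hYre : Integrable (fun ω => (Y ω).re) μ := hY.re
  have hYim : Integrable (fun ω => (Y ω).im) μ := hY.im
  have i1 : (∫ ω, (X ω).re * (Y ω).re ∂μ) = (∫ ω, (X ω).re ∂μ) * ∫ ω, (Y ω).re ∂μ :=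
    hac.integral_fun_mul_eq_mul_integral hXre.aestronglyMeasurable hYre.aestronglyMeasurable
  have i2 : (∫ ω, (X ω).re * (Y ω).im ∂μ) = (∫ ω, (X ω).re ∂μ) * ∫ ω, (Y ω).im ∂μ :=
    had.integral_fun_mul_eq_mul_integral hXre.aestronglyMeasurable hYim.aestronglyMeasurable
  have i3 : (∫ ω, (X ω).im * (Y ω).re ∂μ) = (∫ ω, (X ω).im ∂μ) * ∫ ω, (Y ω).re ∂μ :=
    hbc.integral_fun_mul_eq_mul_integral hXim.aestronglyMeasurable hYre.aestronglyMeasurable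
  have i4 : (∫ ω, (X ω).im * (Y ω).im ∂μ) = (∫ ω, (X ω).im ∂μ) * ∫ ω, (Y ω).im ∂μ :=
    hbd.integral_fun_mul_eq_mul_integral hXim.aestronglyMeasurable hYim.aestronglyMeasurable
  have j1 : Integrable (fun ω => (X ω).re * (Y ω).re) μ := hac.integrable_mul hXre hYre
  have j2 : Integrable (fun ω => (X ω).re * (Y ω).im) μ := had.integrable_mul hXre hYim
  have j3 : Integrable (fun ω => (X ω).im * (Y ω).re) μ := hbc.integrable_mul hXim hYre
  have j4 : Integrable (fun ω => (X ω).im * (Y ω).im) μ := hbd.integrable_mul hXim hYim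
  have eX := integral_re_add_im hX
  have eY := integral_re_add_im hY
  have eXY := integral_re_add_im hXY
  rw [show (∫ ω, X ω * Y ω ∂μ) = ∫ ω, (X * Y) ω ∂μ from rfl, ← eXY, ← eX, ← eY]
  have hre : ∀ ω, RCLike.re ((X * Y) ω) = (X ω).re * (Y ω).re - (X ω).im * (Y ω).im := by
    intro ω; simp [Complex.mul_re]
  have him : ∀ ω, RCLike.im ((X * Y) ω) = (X ω).re * (Y ω).im + (X ω).im * (Y ω).re := by
    intro ω; simp [Complex.mul_im]
  simp_rw [hre, him]
  rw [integral_sub j1 j4, integral_add j2 j3]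
  have hre' : ∀ (f : Ω → ℂ) ω, RCLike.re (f ω) = (f ω).re := fun _ _ => rfl
  simp_rw [hre']
  rw [show (∫ ω, RCLike.im (X ω) ∂μ) = ∫ ω, (X ω).im ∂μ from rfl,
    show (∫ ω, RCLike.im (Y ω) ∂μ) = ∫ ω, (Y ω).im ∂μ from rfl]
  rw [i1, i2, i3, i4]
  push_cast
  rw [show (RCLike.I : ℂ) = Complex.I from rfl]
  ring_nf
  simp [Complex.I_sq]
  ring

/-- Every measurable function is integrable with respect to a Dirac measure. -/
lemma aux_integrable_dirac {f : ℂ → ℂ} (hf : Measurable f) (a : ℂ) :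
    Integrable f (Measure.dirac a) := by
  refine ⟨hf.aestronglyMeasurable, ?_⟩
  rw [HasFiniteIntegral, lintegral_dirac]
  exact ENNReal.coe_lt_top

/-- Expectation of a product of independent complex random variables over a finite set. -/
lemma aux_integral_prod {Ω : Type*} [MeasureSpace Ω] [IsProbabilityMeasure (ℙ : Measure Ω)]
    (f : ℕ → Ω → ℂ) (hf : iIndepFun f ℙ)
    (hmeas : ∀ k, Measurable (f k)) (hint : ∀ k, Integrable (f k) ℙ) (s : Finset ℕ) :
    Integrable (fun ω => ∏ k ∈ s, f k ω) ℙ ∧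
      (∫ ω, ∏ k ∈ s, f k ω ∂ℙ) = ∏ k ∈ s, ∫ ω, f k ω ∂ℙ := by
  classical
  induction s using Finset.induction with
  | empty => simp
  | @insert i s hi ih =>
    have hIndep : IndepFun (∏ j ∈ s, f j) (f i) ℙ :=
      hf.indepFun_finsetProd_of_notMem hmeas hi
    have hprod_eq : (∏ j ∈ s, f j) = fun ω => ∏ j ∈ s, f j ω := by
      funext ω; simp
    have hIndep' : IndepFun (fun ω => ∏ j ∈ s, f j ω) (f i) ℙ := by
      rwa [hprod_eq] at hIndep
    have hint_mul : Integrable ((fun ω => ∏ j ∈ s, f j ω) * f i) ℙ :=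
      hIndep'.integrable_mul ih.1 (hint i)
    constructor
    · have : (fun ω => ∏ k ∈ Insert.insert i s, f k ω) = (fun ω => ∏ j ∈ s, f j ω) * f i := by
        funext ω
        simp [Finset.prod_insert hi, mul_comm]
      rw [this]
      exact hint_mul
    · have h1 : (∫ ω, ∏ k ∈ Insert.insert i s, f k ω ∂ℙ)
          = ∫ ω, (∏ j ∈ s, f j ω) * f i ω ∂ℙ := by
        congr 1
        funext ω
        simp [Finset.prod_insert hi, mul_comm]
      rw [h1, aux_integral_mul_indep hIndep' ih.1 (hint i), ih.2, Finset.prod_insert hi,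
        mul_comm]

open Complex Finset in
lemma aux_abs_e (N j : ℕ) : ‖Complex.exp (2 * Real.pi * Complex.I * j / N)‖ = 1 := by
  have h : (2 * (Real.pi:ℂ) * Complex.I * j / N) = ((2 * Real.pi * j / N : ℝ) : ℂ) * Complex.I := by
    push_cast
    ring
  rw [h, Complex.norm_exp]
  simp

open Complex Finset in
/-- The roots-of-unity filter applied to the truncated exponential series. -/
lemma aux_roots_sum (N : ℕ) (hN0 : N ≠ 0) (w : ℂ) :
    (N:ℂ)⁻¹ * ∑ j ∈ range N, ∑ p ∈ range (N+1),
        (w * Complex.exp (2 * Real.pi * Complex.I * j / N)) ^ p / p.factorial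
      = 1 + w ^ N / N.factorial := by
  have hNC : (N:ℂ) ≠ 0 := Nat.cast_ne_zero.mpr hN0
  set ζ : ℂ := Complex.exp (2 * Real.pi * Complex.I / N) with hζ
  have hζprim : IsPrimitiveRoot ζ N := Complex.isPrimitiveRoot_exp N hN0
  have hej : ∀ j : ℕ, Complex.exp (2 * Real.pi * Complex.I * j / N) = ζ ^ j := by
    intro j
    rw [hζ, ← Complex.exp_nat_mul]
    congr 1
    ring
  have hζN : ζ ^ N = 1 := hζprim.pow_eq_one
  have hgeom : ∀ p ∈ range (N+1), ∑ j ∈ range N, (ζ ^ p) ^ j =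
      if p = 0 ∨ p = N then (N:ℂ) else 0 := by
    intro p hp
    rcases eq_or_ne p 0 with rfl | hp0
    · simp
    rcases eq_or_ne p N with rfl | hpN
    · simp [hζN]
    · have hplt : p < N := by
        simp only [Finset.mem_range] at hp
        omega
      have hne1 : ζ ^ p ≠ 1 := hζprim.pow_ne_one_of_pos_of_lt hp0 hplt
      rw [geom_sum_eq hne1]
      rw [← pow_mul, mul_comm p N, pow_mul, hζN, one_pow]
      simp [hp0, hpN]
  calc (N:ℂ)⁻¹ * ∑ j ∈ range N, ∑ p ∈ range (N+1),
        (w * Complex.exp (2 * Real.pi * Complex.I * j / N)) ^ p / p.factorial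
      = (N:ℂ)⁻¹ * ∑ p ∈ range (N+1), (w ^ p / p.factorial) * ∑ j ∈ range N, (ζ ^ p) ^ j := by
        rw [Finset.sum_comm]
        congr 1
        apply Finset.sum_congr rfl
        intro p _
        rw [Finset.mul_sum]
        apply Finset.sum_congr rfl
        intro j _
        rw [hej j, mul_pow, ← pow_mul, mul_comm j p, pow_mul]
        ring
    _ = (N:ℂ)⁻¹ * ∑ p ∈ range (N+1),
          (if p = 0 ∨ p = N then (w ^ p / p.factorial) * N else 0) := by
        congr 1
        apply Finset.sum_congr rfl
        intro p hp
        rw [hgeom p hp]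
        split_ifs <;> simp
    _ = (N:ℂ)⁻¹ * ((w ^ 0 / (0:ℕ).factorial) * N + (w ^ N / N.factorial) * N) := by
        congr 1
        rw [← Finset.sum_subset (s₁ := ({0, N} : Finset ℕ))]
        · rw [Finset.sum_pair hN0.symm]
          simp [hN0]
        · intro x hx
          simp only [Finset.mem_insert, Finset.mem_singleton] at hx
          simp only [Finset.mem_range]
          omega
        · intro x _ hx
          simp only [Finset.mem_insert, Finset.mem_singleton] at hx
          rw [if_neg]
          tauto
    _ = 1 + w ^ N / N.factorial := by
        field_simp
        ring

open Complex Finset in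
/-- Quantitative estimate on the characteristic function of one step. -/
lemma aux_phi_bound (N : ℕ) (hN : 2 < N) (w : ℂ) (hw : ‖w‖ ≤ 1) :
    ‖(N:ℂ)⁻¹ * (∑ j ∈ range N, Complex.exp
        (w * Complex.exp (2 * Real.pi * Complex.I * j / N))) - 1 - w ^ N / N.factorial‖
      ≤ ‖w‖ ^ (N + 1) := by
  have hN0 : N ≠ 0 := by omega
  have hNC : (N:ℂ) ≠ 0 := Nat.cast_ne_zero.mpr hN0
  have hNR : (0:ℝ) < N := by positivity
  set e : ℕ → ℂ := fun j => Complex.exp (2 * Real.pi * Complex.I * j / N) with he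
  have key : (N:ℂ)⁻¹ * (∑ j ∈ range N, Complex.exp (w * e j)) - 1 - w ^ N / N.factorial
      = (N:ℂ)⁻¹ * ∑ j ∈ range N,
          (Complex.exp (w * e j) - ∑ p ∈ range (N+1), (w * e j) ^ p / p.factorial) := by
    rw [Finset.sum_sub_distrib, mul_sub]
    rw [show ((N:ℂ)⁻¹ * ∑ j ∈ range N, ∑ p ∈ range (N+1), (w * e j) ^ p / p.factorial)
        = 1 + w ^ N / N.factorial from aux_roots_sum N hN0 w]
    ring
  rw [key, norm_mul]
  have habs : ∀ j, ‖w * e j‖ = ‖w‖ := by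
    intro j
    rw [norm_mul, aux_abs_e, mul_one]
  have hbnd : ∀ j ∈ range N,
      ‖Complex.exp (w * e j) - ∑ p ∈ range (N+1), (w * e j) ^ p / p.factorial‖
        ≤ ‖w‖ ^ (N+1) := by
    intro j _
    have h1 : ‖w * e j‖ ≤ 1 := by rw [habs]; exact hw
    have := Complex.exp_bound h1 (n := N+1) (by omega)
    rw [habs] at this
    refine le_trans this ?_
    have hfac : (((N+1).succ : ℕ) : ℝ) * (((N+1).factorial : ℝ) * ((N+1:ℕ) : ℝ))⁻¹ ≤ 1 := by
      rw [mul_inv_le_iff₀ (by positivity), one_mul]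
      have h2 : (N+1).succ ≤ (N+1).factorial * (N+1) := by
        calc (N+1).succ ≤ (N+1) * (N+1) := by nlinarith
          _ ≤ (N+1).factorial * (N+1) := Nat.mul_le_mul_right _ (Nat.self_le_factorial _)
      exact_mod_cast h2
    have hmul := mul_le_mul_of_nonneg_left hfac (pow_nonneg (norm_nonneg w) (N+1))
    simpa using hmul
  calc ‖(N:ℂ)⁻¹‖ * ‖∑ j ∈ range N,
        (Complex.exp (w * e j) - ∑ p ∈ range (N+1), (w * e j) ^ p / p.factorial)‖
      ≤ (N:ℝ)⁻¹ * ∑ j ∈ range N, 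
          ‖Complex.exp (w * e j) - ∑ p ∈ range (N+1), (w * e j) ^ p / p.factorial‖ := by
        rw [norm_inv, Complex.norm_natCast]
        apply mul_le_mul_of_nonneg_left (norm_sum_le _ _) (by positivity)
    _ ≤ (N:ℝ)⁻¹ * ∑ j ∈ range N, ‖w‖ ^ (N+1) := by
        apply mul_le_mul_of_nonneg_left (Finset.sum_le_sum hbnd) (by positivity)
    _ = ‖w‖ ^ (N+1) := by
        rw [Finset.sum_const, card_range, nsmul_eq_mul]
        field_simp

open Complex Finset in
/-- for every `λ ∈ ℂ` and `t ≥ 0`,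
`lim_{n→∞} E[exp(iλW^n(t))] = exp(i^N λ^N αt/N!)`. -/
theorem stmt_4 {Ω : Type*} [MeasureSpace Ω] [IsProbabilityMeasure (ℙ : Measure Ω)]
    (N : ℕ) (hN : 2 < N) (α β : ℂ) (hα : α ≠ 0) (hβ : β ^ N = α)
    (ξ : ℕ → Ω → ℂ) (hmeas : ∀ k, Measurable (ξ k))
    (hindep : iIndepFun ξ ℙ)
    (hdist : ∀ k, Measure.map (ξ k) ℙ = (N : ENNReal)⁻¹ •
      ∑ j ∈ Finset.range N,
        Measure.dirac (β * Complex.exp (2 * Real.pi * Complex.I * j / N)))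
    (lam : ℂ) (t : ℝ) (ht : 0 ≤ t) :
    Tendsto (fun n : ℕ => ∫ ω, Complex.exp (Complex.I * lam * W ξ N n t ω) ∂ℙ) atTop
      (nhds (Complex.exp (Complex.I ^ N * lam ^ N * α * t / (N.factorial : ℂ)))) := by
  have hN0 : N ≠ 0 := by omega
  have hNR : (0:ℝ) < N := by positivity
  -- basic facts about the step distribution
  have hg : ∀ z : ℂ, Measurable fun x : ℂ => Complex.exp (z * x) := fun z =>
    Complex.measurable_exp.comp (measurable_const.mul measurable_id)
  have hint : ∀ (z : ℂ) (k : ℕ), Integrable (fun ω => Complex.exp (z * ξ k ω)) ℙ := by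
    intro z k
    have h1 : Integrable (fun x : ℂ => Complex.exp (z * x)) (Measure.map (ξ k) ℙ) := by
      rw [hdist k]
      refine Integrable.smul_measure ?_ (ENNReal.inv_ne_top.2 (by exact_mod_cast hN0))
      exact integrable_finset_sum_measure.2 fun j _ => aux_integrable_dirac (hg z) _
    exact (integrable_map_measure (hg z).aestronglyMeasurable (hmeas k).aemeasurable).mp h1
  have hEexp : ∀ (z : ℂ) (k : ℕ), (∫ ω, Complex.exp (z * ξ k ω) ∂ℙ)
      = (N:ℂ)⁻¹ * ∑ j ∈ range N, Complex.exp
          (z * (β * Complex.exp (2 * Real.pi * Complex.I * j / N))) := by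
    intro z k
    have h0 : (∫ ω, Complex.exp (z * ξ k ω) ∂ℙ)
        = ∫ x, Complex.exp (z * x) ∂(Measure.map (ξ k) ℙ) :=
      (integral_map (hmeas k).aemeasurable (hg z).aestronglyMeasurable).symm
    rw [h0, hdist k, integral_smul_measure,
      integral_finset_sum_measure (fun j _ => aux_integrable_dirac (hg z) _)]
    simp only [integral_dirac]
    rw [ENNReal.toReal_inv, ENNReal.toReal_natCast, Complex.real_smul]
    push_cast
    ring
  by_cases ht0 : t = 0
  · -- trivial case `t = 0`
    subst ht0
    have hconst : ∀ n : ℕ, (∫ ω, Complex.exp (Complex.I * lam * W ξ N n 0 ω) ∂ℙ) = 1 := by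
      intro n
      have h1 : ∀ ω, Complex.exp (Complex.I * lam * W ξ N n 0 ω) = 1 := by
        intro ω
        simp [W]
      simp_rw [h1]
      simp
    rw [show Complex.I ^ N * lam ^ N * α * ((0:ℝ):ℂ) / (N.factorial : ℂ) = 0 by
      push_cast; ring]
    rw [Complex.exp_zero]
    exact tendsto_const_nhds.congr fun n => (hconst n).symm
  · have htpos : 0 < t := lt_of_le_of_ne ht (Ne.symm ht0)
    set cR : ℕ → ℝ := fun n => (n:ℝ) ^ (-(1/(N:ℝ))) with hcR
    set w : ℕ → ℂ := fun n => Complex.I * lam * ((cR n : ℝ) : ℂ) * β with hw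
    set φ : ℕ → ℂ := fun n => (N:ℂ)⁻¹ * ∑ j ∈ range N, Complex.exp
        (w n * Complex.exp (2 * Real.pi * Complex.I * j / N)) with hφ
    set m : ℕ → ℕ := fun n => ⌊(n:ℝ) * t⌋₊ with hm
    set K : ℝ := ‖lam‖ * ‖β‖ with hK
    -- the expectations factorize
    have key : ∀ n : ℕ, (∫ ω, Complex.exp (Complex.I * lam * W ξ N n t ω) ∂ℙ)
        = φ n ^ m n := by
      intro n
      set z : ℂ := Complex.I * lam * ((cR n : ℝ) : ℂ) with hz
      have h1 : ∀ ω, Complex.exp (Complex.I * lam * W ξ N n t ω)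
          = ∏ k ∈ Finset.Icc 1 ⌊(n:ℝ) * t⌋₊, Complex.exp (z * ξ k ω) := by
        intro ω
        rw [← Complex.exp_sum]
        congr 1
        simp only [W]
        rw [← mul_assoc, ← Finset.mul_sum]
      have hfi : iIndepFun (fun k ω => Complex.exp (z * ξ k ω)) ℙ :=
        hindep.comp (fun _ => fun x => Complex.exp (z * x)) (fun _ => hg z)
      calc (∫ ω, Complex.exp (Complex.I * lam * W ξ N n t ω) ∂ℙ)
          = ∫ ω, ∏ k ∈ Finset.Icc 1 ⌊(n:ℝ) * t⌋₊, Complex.exp (z * ξ k ω) ∂ℙ := by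
            simp_rw [h1]
        _ = ∏ k ∈ Finset.Icc 1 ⌊(n:ℝ) * t⌋₊, ∫ ω, Complex.exp (z * ξ k ω) ∂ℙ :=
            (aux_integral_prod (fun k ω => Complex.exp (z * ξ k ω)) hfi
              (fun k => (hg z).comp (hmeas k)) (fun k => hint z k) _).2
        _ = ∏ _k ∈ Finset.Icc 1 ⌊(n:ℝ) * t⌋₊, φ n := by
            refine Finset.prod_congr rfl fun k _ => (hEexp z k).trans ?_
            rw [hφ]
            congr 1
            refine Finset.sum_congr rfl fun j _ => ?_
            congr 1
            rw [hz, hw]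
            ring
        _ = φ n ^ m n := by
            rw [Finset.prod_const, Nat.card_Icc, hm]
            simp
    -- the limit of `m n * (φ n - 1)`
    have hcR0 : ∀ n, 0 ≤ cR n := fun n => Real.rpow_nonneg (Nat.cast_nonneg n) _
    have habsw : ∀ n, ‖w n‖ = K * cR n := by
      intro n
      rw [hw]
      simp only [norm_mul, Complex.norm_I, Complex.norm_real, Real.norm_eq_abs, one_mul]
      rw [_root_.abs_of_nonneg (hcR0 n)]
      ring
    have hcr0 : Tendsto cR atTop (nhds 0) :=
      (tendsto_rpow_neg_atTop (by positivity : (0:ℝ) < 1/(N:ℝ))).comp tendsto_natCast_atTop_atTop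
    have hw0 : Tendsto (fun n => ‖w n‖) atTop (nhds 0) := by
      have := hcr0.const_mul K
      rw [mul_zero] at this
      exact this.congr fun n => (habsw n).symm
    have hwev : ∀ᶠ n in atTop, ‖w n‖ ≤ 1 :=
      hw0.eventually_le_const (by norm_num)
    have hcpow : ∀ n : ℕ, 1 ≤ n → (cR n) ^ N = (n:ℝ)⁻¹ := by
      intro n hn
      have hn0 : (0:ℝ) < n := by exact_mod_cast hn
      rw [hcR]
      rw [← Real.rpow_natCast ((n:ℝ) ^ (-(1/(N:ℝ)))) N, ← Real.rpow_mul hn0.le]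
      rw [show (-(1/(N:ℝ)) * N) = -1 by field_simp]
      exact Real.rpow_neg_one _
    have hsplit : (fun n => ((m n : ℕ) : ℂ) * (φ n - 1))
        = (fun n => ((m n : ℕ) : ℂ) * (w n ^ N / N.factorial))
          + fun n => ((m n : ℕ) : ℂ) * (φ n - 1 - w n ^ N / N.factorial) := by
      funext n
      simp only [Pi.add_apply]
      ring
    have hquot : Tendsto (fun n : ℕ => ((m n : ℕ) : ℂ) / (n : ℂ)) atTop (nhds (t : ℂ)) := by
      have hre : Tendsto (fun n : ℕ => ((m n : ℕ) : ℝ) / (n : ℝ)) atTop (nhds t) := by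
        have h := (tendsto_nat_floor_mul_div_atTop ht).comp
          (tendsto_natCast_atTop_atTop (R := ℝ))
        exact h.congr fun n => by simp [hm, mul_comm]
      have := (Complex.continuous_ofReal.tendsto t).comp hre
      exact this.congr fun n => by push_cast; simp
    have T1 : Tendsto (fun n => ((m n : ℕ) : ℂ) * (w n ^ N / N.factorial)) atTop
        (nhds (Complex.I ^ N * lam ^ N * α * t / (N.factorial : ℂ))) := by
      have hev : (fun n : ℕ => ((m n : ℕ) : ℂ) / (n : ℂ)
            * (Complex.I ^ N * lam ^ N * α / (N.factorial : ℂ)))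
          =ᶠ[atTop] fun n => ((m n : ℕ) : ℂ) * (w n ^ N / N.factorial) := by
        filter_upwards [eventually_ge_atTop 1] with n hn
        have hwN : w n ^ N = Complex.I ^ N * lam ^ N * α * ((n : ℂ))⁻¹ := by
          rw [hw]
          simp only [mul_pow]
          rw [← Complex.ofReal_pow, hcpow n hn, hβ]
          push_cast
          ring
        rw [hwN]
        ring
      refine Tendsto.congr' hev ?_
      have := hquot.mul_const (Complex.I ^ N * lam ^ N * α / (N.factorial : ℂ))
      convert this using 2
      ring
    have T2 : Tendsto (fun n => ((m n : ℕ) : ℂ) * (φ n - 1 - w n ^ N / N.factorial)) atTop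
        (nhds 0) := by
      apply squeeze_zero_norm' (a := fun n => t * K ^ (N+1) * cR n)
      · filter_upwards [hwev, eventually_ge_atTop 1] with n h1 hn
        have hn0 : (0:ℝ) < n := by exact_mod_cast hn
        have hb := aux_phi_bound N hN (w n) h1
        calc ‖((m n : ℕ) : ℂ) * (φ n - 1 - w n ^ N / N.factorial)‖
            = ((m n : ℕ) : ℝ) * ‖φ n - 1 - w n ^ N / N.factorial‖ := by
              rw [norm_mul]
              norm_num
          _ ≤ ((n:ℝ) * t) * (‖w n‖ ^ (N+1)) := by
              apply mul_le_mul _ hb (norm_nonneg _) (by positivity)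
              exact Nat.floor_le (by positivity)
          _ = ((n:ℝ) * t) * (K ^ (N+1) * ((n:ℝ)⁻¹ * cR n)) := by
              rw [habsw, mul_pow, pow_succ (cR n) N, hcpow n hn]
          _ = t * K ^ (N+1) * cR n := by
              field_simp
      · have := hcr0.const_mul (t * K ^ (N+1))
        rw [mul_zero] at this
        exact this
    have hmain : Tendsto (fun n => ((m n : ℕ) : ℂ) * (φ n - 1)) atTop
        (nhds (Complex.I ^ N * lam ^ N * α * t / (N.factorial : ℂ))) := by
      rw [hsplit]
      have := T1.add T2
      rw [add_zero] at this
      exact this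
    have hmtop : Tendsto m atTop atTop := by
      have := tendsto_nat_floor_mul_atTop t htpos
      exact this.congr fun n => by rw [hm, mul_comm]
    have hfin := aux_tendsto_pow_exp hmain hmtop
    exact hfin.congr fun n => (key n).symm
end

section
/- Let g : ℂ → ℂ be an analytic function of exponential type c < ∞. Then the following Itô formula holds pointwise on Ω: for every z ∈ ℂ, n ≥ 1 and t ≥ 0, the series Σ_{k=1}^∞ (1/k!) · ∫_0^t g^{(k)}(z + W^n(s)) d(W^n(s))^k converges and equals g(z + W^n(t)) − g(z), where ∫_0^t g^{(k)}(z + W^n(s)) d(W^n(s))^k := n^{−k/N} · Σ_{τ=0}^{⌊nt⌋−1} g^{(k)}(z + W^n(τ/n)) · (ξ_{τ+1})^k. -/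
open MeasureTheory ProbabilityTheory Filter

/-- The discrete Itô integral
`∫₀ᵗ g(W^n(s)) d(W^n(s))^k := n^{-k/N} ∑_{τ=0}^{⌊nt⌋−1} g(W^n(τ/n))·(ξ_{τ+1})^k`. -/
noncomputable def itoInt {Ω : Type*} (ξ : ℕ → Ω → ℂ) (N : ℕ) (g : ℂ → ℂ)
    (k n : ℕ) (t : ℝ) (ω : Ω) : ℂ :=
  (((n : ℝ) ^ (-((k : ℝ) / (N : ℝ))) : ℝ) : ℂ) *
    ∑ τ ∈ Finset.range ⌊(n : ℝ) * t⌋₊, g (W ξ N n ((τ : ℝ) / (n : ℝ)) ω) * (ξ (τ + 1) ω) ^ k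

lemma W_nat_div {Ω : Type*} (ξ : ℕ → Ω → ℂ) (N n : ℕ) (hn : 1 ≤ n) (τ : ℕ) (ω : Ω) :
    W ξ N n ((τ : ℝ) / (n : ℝ)) ω
      = (((n : ℝ) ^ (-(1 / (N : ℝ))) : ℝ) : ℂ) * ∑ k ∈ Finset.Icc 1 τ, ξ k ω := by
  have hn0 : (n : ℝ) ≠ 0 := by positivity
  have : (n : ℝ) * ((τ : ℝ) / (n : ℝ)) = (τ : ℝ) := by field_simp
  rw [W, this, Nat.floor_natCast]

/-- (Itô formula) let `g : ℂ → ℂ` be an entire analytic function of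
exponential type `c < ∞`. Then pointwise on `Ω`, for every `z ∈ ℂ`, `n ≥ 1` and
`t ≥ 0`, the series `∑_{k≥1} (1/k!)·∫₀ᵗ g^{(k)}(z + W^n(s)) d(W^n(s))^k` converges and
equals `g(z + W^n(t)) − g(z)`.  (The sum over `k ≥ 1` is indexed below by `k + 1`,
`k : ℕ`.) -/
theorem stmt_12 {Ω : Type*} [MeasureSpace Ω] [IsProbabilityMeasure (ℙ : Measure Ω)]
    (N : ℕ) (hN : 2 < N) (α β : ℂ) (hα : α ≠ 0) (hβ : β ^ N = α)
    (ξ : ℕ → Ω → ℂ) (hmeas : ∀ k, Measurable (ξ k))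
    (hindep : iIndepFun ξ ℙ)
    (hdist : ∀ k, Measure.map (ξ k) ℙ = (N : ENNReal)⁻¹ •
      ∑ j ∈ Finset.range N,
        Measure.dirac (β * Complex.exp (2 * Real.pi * Complex.I * j / N)))
    (g : ℂ → ℂ) (hg : Differentiable ℂ g) (c : ℝ) (hc : 0 ≤ c)
    (htype : Tendsto (fun k : ℕ => ‖iteratedDeriv k g 0‖ ^ (1 / (k : ℝ)))
      atTop (nhds c))
    (z : ℂ) (n : ℕ) (hn : 1 ≤ n) (t : ℝ) (ht : 0 ≤ t) (ω : Ω) :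
    HasSum
      (fun k : ℕ => (1 / (((k + 1).factorial : ℕ) : ℂ)) *
        itoInt ξ N (fun w => iteratedDeriv (k + 1) g (z + w)) (k + 1) n t ω)
      (g (z + W ξ N n t ω) - g z) := by
  set m : ℕ := ⌊(n : ℝ) * t⌋₊ with hm
  set r : ℂ := (((n : ℝ) ^ (-(1 / (N : ℝ))) : ℝ) : ℂ) with hr
  -- Taylor expansion at each point of the walk
  have hW : ∀ τ : ℕ, W ξ N n ((τ : ℝ) / (n : ℝ)) ω = r * ∑ k ∈ Finset.Icc 1 τ, ξ k ω :=
    fun τ => W_nat_div ξ N n hn τ ω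
  set S : ℕ → ℂ := fun τ => z + W ξ N n ((τ : ℝ) / (n : ℝ)) ω with hS
  have hstep : ∀ τ : ℕ, S (τ + 1) = S τ + r * ξ (τ + 1) ω := by
    intro τ
    simp only [hS, hW, Nat.cast_add, Nat.cast_one]
    rw [Finset.sum_Icc_succ_top (by omega : 1 ≤ τ + 1)]
    push_cast
    ring
  have htaylor : ∀ τ : ℕ, HasSum
      (fun k : ℕ => (((k + 1).factorial : ℂ))⁻¹ *
        iteratedDeriv (k + 1) g (S τ) * (r * ξ (τ + 1) ω) ^ (k + 1))
      (g (S (τ + 1)) - g (S τ)) := by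
    intro τ
    have h0 := Complex.hasSum_taylorSeries_of_entire hg (S τ) (S (τ + 1))
    have h0' : HasSum (fun k : ℕ => ((k.factorial : ℂ))⁻¹ *
        iteratedDeriv k g (S τ) * (r * ξ (τ + 1) ω) ^ k) (g (S (τ + 1))) := by
      refine h0.congr_fun fun k => ?_
      rw [hstep τ, add_sub_cancel_left]
      simp [smul_eq_mul]; ring
    refine (hasSum_nat_add_iff (f := fun k : ℕ => ((k.factorial : ℂ))⁻¹ *
        iteratedDeriv k g (S τ) * (r * ξ (τ + 1) ω) ^ k) 1).mpr ?_
    convert h0' using 1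
    · rfl
    simp
  -- sum over τ
  have hsum := hasSum_sum (s := Finset.range m)
    (f := fun τ (k : ℕ) => (((k + 1).factorial : ℂ))⁻¹ *
      iteratedDeriv (k + 1) g (S τ) * (r * ξ (τ + 1) ω) ^ (k + 1))
    (a := fun τ => g (S (τ + 1)) - g (S τ)) (fun τ _ => htaylor τ)
  have htel : ∑ τ ∈ Finset.range m, (g (S (τ + 1)) - g (S τ))
      = g (z + W ξ N n t ω) - g z := by
    rw [Finset.sum_range_sub (fun τ => g (S τ))]
    have h1 : S m = z + W ξ N n t ω := by
      simp only [hS]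
      rw [hW m]
      rfl
    have h2 : S 0 = z := by
      simp only [hS]
      rw [hW 0]
      simp
    rw [h1, h2]
  rw [htel] at hsum
  refine hsum.congr_fun fun k => ?_
  -- identify the summand with itoInt
  have hnpos : (0 : ℝ) < (n : ℝ) := by positivity
  have hrpow : (((n : ℝ) ^ (-((((k + 1 : ℕ)) : ℝ) / (N : ℝ))) : ℝ) : ℂ) = r ^ (k + 1) := by
    have : ((n : ℝ) ^ (-(1 / (N : ℝ)))) ^ (k + 1)
        = (n : ℝ) ^ (-((((k + 1 : ℕ)) : ℝ) / (N : ℝ))) := by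
      rw [← Real.rpow_natCast ((n : ℝ) ^ (-(1 / (N : ℝ)))) (k + 1),
        ← Real.rpow_mul hnpos.le]
      congr 1
      push_cast
      ring
    rw [← this, hr]
    push_cast
    ring
  simp only [itoInt, ← hm, hrpow]
  rw [Finset.mul_sum, Finset.mul_sum]
  refine Finset.sum_congr rfl fun τ _ => ?_
  simp only [hS]
  rw [mul_pow]
  ring
end
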